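/- arXiv:2103.11050 — 2 statements merged into one kernel-verified Lean document; each statement's English description precedes it below -/
import Mathlib

section
/- Let Ω ⊆ ℝ² be open, let κ, κ_ε : ℝ² → ℝ, ε ∈ ℝ, and L ∈ ℕ. Let p^m : ℝ² → ℝ and δp_0, …, δp_L : ℝ² → ℝ be differentiable at every point of Ω, and let u^m, δu_0, …, δu_L : ℝ² → ℝ² be vector fields. Assume that on Ω: u^m + δu_0 + (κ + ε·κ_ε)·∇p^m = −κ·∇δp_0, and for each ℓ = 1, …, L: δu_ℓ + κ_ε·∇δp_{ℓ−1} = −κ·∇δp_ℓ. Define δp := Σ_{ℓ=0}^{L} ε^ℓ·δp_ℓ and δu := Σ_{ℓ=0}^{L} ε^ℓ·δu_ℓ. Then at every point of Ω, u^m + δu + (κ + ε·κ_ε)·∇p^m = −(κ + ε·κ_ε)·∇δp + ε^{L+1}·κ_ε·∇δp_L; that is, the truncated perturbation expansion satisfies the Darcy relation of the auxiliary problem up to a residual of size ε^{L+1}. -/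
open Finset

lemma grad_sum_smul {F : Type*} [NormedAddCommGroup F] [InnerProductSpace ℝ F]
    [CompleteSpace F]
    (s : Finset ℕ) (c : ℕ → ℝ) (f : ℕ → F → ℝ) (x : F)
    (h : ∀ ℓ ∈ s, DifferentiableAt ℝ (f ℓ) x) :
    HasGradientAt (fun y => ∑ ℓ ∈ s, c ℓ * f ℓ y)
      (∑ ℓ ∈ s, c ℓ • gradient (f ℓ) x) x := by
  rw [hasGradientAt_iff_hasFDerivAt, map_sum]
  apply HasFDerivAt.fun_sum
  intro ℓ hℓ
  rw [LinearIsometryEquiv.map_smul]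
  exact ((h ℓ hℓ).hasGradientAt.hasFDerivAt).const_smul (c ℓ)

lemma darcy_aux {V : Type*} [AddCommGroup V] [Module ℝ V]
    (a b ε : ℝ) (um Gpm : V) (G U : ℕ → V) (L : ℕ)
    (h0 : um + U 0 + (a + ε * b) • Gpm = -(a • G 0))
    (hℓ : ∀ ℓ, 1 ≤ ℓ → ℓ ≤ L → U ℓ + b • G (ℓ - 1) = -(a • G ℓ)) :
    um + (∑ ℓ ∈ Finset.range (L + 1), ε ^ ℓ • U ℓ) + (a + ε * b) • Gpm =
      -((a + ε * b) • ∑ ℓ ∈ Finset.range (L + 1), ε ^ ℓ • G ℓ) +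
        ε ^ (L + 1) • (b • G L) := by
  induction L with
  | zero =>
      simp only [zero_add, Finset.sum_range_one, pow_zero, one_smul, pow_one]
      rw [show um + U 0 + (a + ε * b) • Gpm = -(a • G 0) from h0]
      module
  | succ n ih =>
      have hU : U (n + 1) + b • G n = -(a • G (n + 1)) := by
        simpa using hℓ (n + 1) (Nat.le_add_left 1 n) le_rfl
      have ih' := ih (fun ℓ h1 h2 => hℓ ℓ h1 (h2.trans (Nat.le_succ n)))
      rw [Finset.sum_range_succ, Finset.sum_range_succ (f := fun ℓ => ε ^ ℓ • G ℓ)]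
      have e1 : um + (∑ ℓ ∈ Finset.range (n + 1), ε ^ ℓ • U ℓ + ε ^ (n + 1) • U (n + 1))
          + (a + ε * b) • Gpm =
          (um + (∑ ℓ ∈ Finset.range (n + 1), ε ^ ℓ • U ℓ) + (a + ε * b) • Gpm)
            + ε ^ (n + 1) • U (n + 1) := by abel
      rw [e1, ih']
      have e2 : U (n + 1) = -(a • G (n + 1)) - b • G n := by
        rw [← hU]; abel
      rw [e2]
      module

/-- If the order-0 term of the perturbation expansion satisfies the Darcy
relation of 𝒫_{û₀} and each order-ℓ term (1 ≤ ℓ ≤ L) satisfies the Darcy relation of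
𝒫_{û_ℓ}, then the truncated expansions δp = Σ_{ℓ≤L} ε^ℓ δp_ℓ, δu = Σ_{ℓ≤L} ε^ℓ δu_ℓ
satisfy the Darcy relation of the auxiliary problem up to a residual of size ε^{L+1}. -/
theorem truncated_expansion_darcy
    (Ω : Set (EuclideanSpace ℝ (Fin 2))) (hΩ : IsOpen Ω)
    (κ κε : EuclideanSpace ℝ (Fin 2) → ℝ) (ε : ℝ) (L : ℕ)
    (pm : EuclideanSpace ℝ (Fin 2) → ℝ)
    (δp : ℕ → EuclideanSpace ℝ (Fin 2) → ℝ)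
    (um : EuclideanSpace ℝ (Fin 2) → EuclideanSpace ℝ (Fin 2))
    (δu : ℕ → EuclideanSpace ℝ (Fin 2) → EuclideanSpace ℝ (Fin 2))
    (hpm : ∀ x ∈ Ω, DifferentiableAt ℝ pm x)
    (hδp : ∀ ℓ ≤ L, ∀ x ∈ Ω, DifferentiableAt ℝ (δp ℓ) x)
    (h0 : ∀ x ∈ Ω,
      um x + δu 0 x + (κ x + ε * κε x) • gradient pm x =
        -(κ x • gradient (δp 0) x))
    (hℓ : ∀ ℓ, 1 ≤ ℓ → ℓ ≤ L → ∀ x ∈ Ω,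
      δu ℓ x + κε x • gradient (δp (ℓ - 1)) x = -(κ x • gradient (δp ℓ) x)) :
    ∀ x ∈ Ω,
      um x + (∑ ℓ ∈ Finset.range (L + 1), ε ^ ℓ • δu ℓ x) +
          (κ x + ε * κε x) • gradient pm x =
        -((κ x + ε * κε x) •
            gradient (fun y => ∑ ℓ ∈ Finset.range (L + 1), ε ^ ℓ * δp ℓ y) x) +
          ε ^ (L + 1) • (κε x • gradient (δp L) x) := by
  intro x hx
  have hg : gradient (fun y => ∑ ℓ ∈ Finset.range (L + 1), ε ^ ℓ * δp ℓ y) x =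
      ∑ ℓ ∈ Finset.range (L + 1), ε ^ ℓ • gradient (δp ℓ) x :=
    (grad_sum_smul _ _ _ x (fun ℓ hℓ' =>
      hδp ℓ (Nat.lt_succ_iff.mp (Finset.mem_range.mp hℓ')) x hx)).gradient
  rw [hg]
  exact darcy_aux (κ x) (κε x) ε (um x) (gradient pm x)
    (fun ℓ => gradient (δp ℓ) x) (fun ℓ => δu ℓ x) L (h0 x hx)
    (fun ℓ h1 h2 => hℓ ℓ h1 h2 x hx)
end

section
/- Let Ω ⊆ ℝ² be open, let κ, κ_ε, q : ℝ² → ℝ, ε ∈ ℝ, and L ∈ ℕ. Let p^m : ℝ² → ℝ and δp_0, …, δp_L : ℝ² → ℝ be differentiable at every point of Ω, and let u^m, δu_0, …, δu_L : ℝ² → ℝ² be vector fields. Define w := (κ + ε·κ_ε)·∇p^m and, for 1 ≤ ℓ ≤ L, v_ℓ := κ_ε·∇δp_{ℓ−1}. Assume that u^m, w, each δu_ℓ (0 ≤ ℓ ≤ L), and each v_ℓ (1 ≤ ℓ ≤ L) are differentiable at every point of Ω, and that on Ω: ∇·u^m = q, ∇·(u^m + δu_0 + w) = q + ∇·w, and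 ∇·(δu_ℓ + v_ℓ) = ∇·v_ℓ for each ℓ = 1, …, L. Then ∇·(u^m + Σ_{ℓ=0}^{L} ε^ℓ·δu_ℓ) = q at every point of Ω; that is, the truncated perturbation expansion conserves mass exactly. -/
noncomputable section

/-- The divergence of a vector field on ℝ², i.e. the trace of its Fréchet derivative. -/
def div2 (u : EuclideanSpace ℝ (Fin 2) → EuclideanSpace ℝ (Fin 2))
    (x : EuclideanSpace ℝ (Fin 2)) : ℝ :=
  LinearMap.trace ℝ (EuclideanSpace ℝ (Fin 2)) (fderiv ℝ u x).toLinearMap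

lemma div2_add {u v : EuclideanSpace ℝ (Fin 2) → EuclideanSpace ℝ (Fin 2)}
    {x : EuclideanSpace ℝ (Fin 2)} (hu : DifferentiableAt ℝ u x)
    (hv : DifferentiableAt ℝ v x) :
    div2 (fun y => u y + v y) x = div2 u x + div2 v x := by
  unfold div2
  rw [fderiv_fun_add hu hv]
  simp [ContinuousLinearMap.coe_add, map_add]

lemma div2_smul (c : ℝ) {u : EuclideanSpace ℝ (Fin 2) → EuclideanSpace ℝ (Fin 2)}
    {x : EuclideanSpace ℝ (Fin 2)} (hu : DifferentiableAt ℝ u x) :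
    div2 (fun y => c • u y) x = c * div2 u x := by
  unfold div2
  rw [fderiv_fun_const_smul hu]
  simp [ContinuousLinearMap.coe_smul, map_smul, smul_eq_mul]

/-- If ∇·uᵐ = q, the order-0 term of the perturbation expansion satisfies
the divergence equation of 𝒫_{û₀}, and each order-ℓ term (1 ≤ ℓ ≤ L) satisfies the
divergence equation of 𝒫_{û_ℓ}, then the truncated expansion
uᵐ + Σ_{ℓ≤L} ε^ℓ δu_ℓ conserves mass exactly: its divergence equals q on Ω. -/
theorem truncated_expansion_mass_conservation
    (Ω : Set (EuclideanSpace ℝ (Fin 2))) (hΩ : IsOpen Ω)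
    (κ κε q : EuclideanSpace ℝ (Fin 2) → ℝ) (ε : ℝ) (L : ℕ)
    (pm : EuclideanSpace ℝ (Fin 2) → ℝ)
    (δp : ℕ → EuclideanSpace ℝ (Fin 2) → ℝ)
    (um : EuclideanSpace ℝ (Fin 2) → EuclideanSpace ℝ (Fin 2))
    (δu : ℕ → EuclideanSpace ℝ (Fin 2) → EuclideanSpace ℝ (Fin 2))
    (hpm : ∀ x ∈ Ω, DifferentiableAt ℝ pm x)
    (hδp : ∀ ℓ ≤ L, ∀ x ∈ Ω, DifferentiableAt ℝ (δp ℓ) x)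
    (w : EuclideanSpace ℝ (Fin 2) → EuclideanSpace ℝ (Fin 2))
    (hw : ∀ x, w x = (κ x + ε * κε x) • gradient pm x)
    (v : ℕ → EuclideanSpace ℝ (Fin 2) → EuclideanSpace ℝ (Fin 2))
    (hv : ∀ ℓ, 1 ≤ ℓ → ℓ ≤ L → ∀ x, v ℓ x = κε x • gradient (δp (ℓ - 1)) x)
    (hum : ∀ x ∈ Ω, DifferentiableAt ℝ um x)
    (hwdiff : ∀ x ∈ Ω, DifferentiableAt ℝ w x)
    (hδu : ∀ ℓ ≤ L, ∀ x ∈ Ω, DifferentiableAt ℝ (δu ℓ) x)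
    (hvdiff : ∀ ℓ, 1 ≤ ℓ → ℓ ≤ L → ∀ x ∈ Ω, DifferentiableAt ℝ (v ℓ) x)
    (hdivum : ∀ x ∈ Ω, div2 um x = q x)
    (h0 : ∀ x ∈ Ω,
      div2 (fun y => um y + δu 0 y + w y) x = q x + div2 w x)
    (hℓ : ∀ ℓ, 1 ≤ ℓ → ℓ ≤ L → ∀ x ∈ Ω,
      div2 (fun y => δu ℓ y + v ℓ y) x = div2 (v ℓ) x) :
    ∀ x ∈ Ω,
      div2 (fun y => um y + ∑ ℓ ∈ Finset.range (L + 1), ε ^ ℓ • δu ℓ y) x = q x := by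
  intro x hx
  -- div of each δu ℓ is zero at x
  have hδu0 : div2 (δu 0) x = 0 := by
    have h1 := h0 x hx
    rw [div2_add ((hum x hx).fun_add (hδu 0 (Nat.zero_le _) x hx)) (hwdiff x hx),
        div2_add (hum x hx) (hδu 0 (Nat.zero_le _) x hx)] at h1
    have := hdivum x hx
    linarith
  have hδuz : ∀ ℓ ≤ L, div2 (δu ℓ) x = 0 := by
    intro ℓ hℓL
    rcases Nat.eq_zero_or_pos ℓ with h | h
    · simpa [h] using hδu0
    · have h1 := hℓ ℓ h hℓL x hx
      rw [div2_add (hδu ℓ hℓL x hx) (hvdiff ℓ h hℓL x hx)] at h1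
      linarith
  -- sum differentiability and divergence
  have key : ∀ n ≤ L + 1,
      DifferentiableAt ℝ (fun y => ∑ ℓ ∈ Finset.range n, ε ^ ℓ • δu ℓ y) x ∧
      div2 (fun y => ∑ ℓ ∈ Finset.range n, ε ^ ℓ • δu ℓ y) x = 0 := by
    intro n hn
    induction n with
    | zero =>
      constructor
      · simp only [Finset.range_zero, Finset.sum_empty]
        exact differentiableAt_const _
      · simp [div2]
    | succ k ih =>
      have hk := ih (le_of_lt (Nat.lt_of_succ_le hn))
      have hkL : k ≤ L := Nat.lt_succ_iff.mp (Nat.lt_of_succ_le hn)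
      have hdk : DifferentiableAt ℝ (fun y => ε ^ k • δu k y) x :=
        (hδu k hkL x hx).fun_const_smul _
      constructor
      · have := hk.1.fun_add hdk
        simpa [Finset.sum_range_succ] using this
      · have heq : (fun y => ∑ ℓ ∈ Finset.range (k+1), ε ^ ℓ • δu ℓ y)
            = fun y => (∑ ℓ ∈ Finset.range k, ε ^ ℓ • δu ℓ y) + ε ^ k • δu k y := by
          funext y; rw [Finset.sum_range_succ]
        rw [heq, div2_add hk.1 hdk, hk.2, div2_smul _ (hδu k hkL x hx),
            hδuz k hkL]
        ring
  have hsum := key (L + 1) le_rfl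
  rw [div2_add (hum x hx) hsum.1, hsum.2, hdivum x hx, add_zero]


end
end
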